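/- arXiv:2312.12843 — 3 statements merged into one kernel-verified Lean document; each statement's English description precedes it below -/
import Mathlib

section
/- Let Γ1 be an r1-regular signed graph on n1 vertices with adjacency matrix A1 and marking μ1, and Γ2 any signed graph on n2 vertices with adjacency matrix A2 and marking μ2. Then for every real x such that (x−1)·I_{n2} − Q(Γ2) is invertible, det(x·I − Q(Γ1⊛Γ2)) = det((x−1)·I_{n2} − Q(Γ2))^{n1} · det( (x − r1)·(x − r1 − n2 − χ_{Q(Γ2)}(x−1))·I_{n1} − A_{1μ}² ). Equivalently, the signless Laplacian characteristic polynomial of Γ1⊛Γ2 equals ∏_{i=1}^{n2}(x − 1 − ν_{2i})^{n1} · ∏_{i=1}^{n1}( (x − r1 − n2 − χ_{Q(Γ2)}(x−1))(x − r1) − (λ'_{1i})² ), where ν_{2i} are the eigenvalues of Q(Γ2) and λ'_{1i} the eigenvalues of A_{1μ}. -/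
open Matrix Kronecker BigOperators

/-- The block `μ₂ᵀ ⊗ Φ₁`, where `Φ₁ = diag μ₁` and `μ₂` is regarded as an `n₂×1`
column vector: an `n₁ × (n₂·n₁)` matrix. -/
noncomputable def muBlock {n1 n2 : ℕ} (μ1 : Fin n1 → ℝ) (μ2 : Fin n2 → ℝ) :
    Matrix (Fin n1) (Fin n2 × Fin n1) ℝ :=
  Matrix.of fun i jk => μ2 jk.1 * Matrix.diagonal μ1 i jk.2

/-- Adjacency matrix of the duplication add vertex corona `Γ₁ ⊛ Γ₂`, in `3×3` block form
`[[0, A₁μ, 0], [A₁μ, 0, μ₂ᵀ⊗Φ₁], [0, μ₂⊗Φ₁, A₂⊗I]]` (blocks of sizes `n₁, n₁, n₁·n₂`),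
where `A₁μ = Φ₁·|A₁|·Φ₁` is supplied as a parameter. -/
noncomputable def coronaStar {n1 n2 : ℕ} (A1μ : Matrix (Fin n1) (Fin n1) ℝ)
    (A2 : Matrix (Fin n2) (Fin n2) ℝ) (μ1 : Fin n1 → ℝ) (μ2 : Fin n2 → ℝ) :
    Matrix ((Fin n1 ⊕ Fin n1) ⊕ Fin n2 × Fin n1)
      ((Fin n1 ⊕ Fin n1) ⊕ Fin n2 × Fin n1) ℝ :=
  Matrix.fromBlocks
    (Matrix.fromBlocks 0 A1μ A1μ 0)
    (Matrix.fromRows (0 : Matrix (Fin n1) (Fin n2 × Fin n1) ℝ) (muBlock μ1 μ2))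
    (Matrix.fromCols (0 : Matrix (Fin n2 × Fin n1) (Fin n1) ℝ) (muBlock μ1 μ2)ᵀ)
    (A2 ⊗ₖ (1 : Matrix (Fin n1) (Fin n1) ℝ))

/-- The signed `M`-coronal `χ_M(x) = μᵀ·(x·I − M)⁻¹·μ`. -/
noncomputable def coronal {V : Type} [Fintype V] [DecidableEq V]
    (M : Matrix V V ℝ) (μ : V → ℝ) (x : ℝ) : ℝ :=
  μ ⬝ᵥ ((x • (1 : Matrix V V ℝ) - M)⁻¹ *ᵥ μ)

/-- The degree matrix of a signed graph: the diagonal matrix of the row sums of the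
entrywise absolute value of its adjacency matrix. -/
noncomputable def degMat {V : Type} [Fintype V] [DecidableEq V] (M : Matrix V V ℝ) :
    Matrix V V ℝ :=
  Matrix.diagonal fun i => ∑ j, |M i j|


/-- Determinant of a symmetric 2×2 block matrix with scalar diagonal blocks. -/
lemma det_two_block {n : ℕ} (S : Matrix (Fin n) (Fin n) ℝ) (a : ℝ) :
    ∀ d : ℝ, (Matrix.fromBlocks (a • 1) (-S) (-S) (d • (1 : Matrix (Fin n) (Fin n) ℝ))).det
      = ((a * d) • (1 : Matrix (Fin n) (Fin n) ℝ) - S ^ 2).det := by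
  have key : ∀ d : ℝ, d ≠ 0 →
      (Matrix.fromBlocks (a • 1) (-S) (-S) (d • (1 : Matrix (Fin n) (Fin n) ℝ))).det
        = ((a * d) • (1 : Matrix (Fin n) (Fin n) ℝ) - S ^ 2).det := by
    intro d hd
    haveI : Invertible (d • (1 : Matrix (Fin n) (Fin n) ℝ)) :=
      Matrix.invertibleOfIsUnitDet _ (by
        simp [Matrix.det_smul, isUnit_iff_ne_zero, pow_ne_zero, hd])
    have hinv : (d • (1 : Matrix (Fin n) (Fin n) ℝ))⁻¹ = d⁻¹ • 1 := by
      apply Matrix.inv_eq_right_inv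
      rw [Matrix.smul_mul, Matrix.mul_smul, smul_smul, mul_inv_cancel₀ hd, Matrix.mul_one, one_smul]
    rw [Matrix.det_fromBlocks₂₂, Matrix.invOf_eq_nonsing_inv, hinv]
    have h1 : (a • (1 : Matrix (Fin n) (Fin n) ℝ)) - (-S) * (d⁻¹ • 1) * (-S)
        = a • 1 - d⁻¹ • S ^ 2 := by
      rw [Matrix.neg_mul, Matrix.mul_neg, Matrix.neg_mul, neg_neg, Matrix.mul_smul,
        Matrix.mul_one, Matrix.smul_mul, sq]
    have h2 : (a * d) • (1 : Matrix (Fin n) (Fin n) ℝ) - S ^ 2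
        = d • (a • (1 : Matrix (Fin n) (Fin n) ℝ) - d⁻¹ • S ^ 2) := by
      rw [smul_sub, smul_smul, smul_smul, mul_inv_cancel₀ hd, one_smul, mul_comm]
    rw [h1, h2, Matrix.det_smul, Matrix.det_smul, Fintype.card_fin, Matrix.det_one, mul_one]
  intro d
  have hc1 : Continuous fun d : ℝ =>
      (Matrix.fromBlocks (a • 1) (-S) (-S) (d • (1 : Matrix (Fin n) (Fin n) ℝ))).det :=
    Continuous.matrix_det (Continuous.matrix_fromBlocks continuous_const continuous_const
      continuous_const (continuous_id.smul continuous_const))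
  have hc2 : Continuous fun d : ℝ =>
      ((a * d) • (1 : Matrix (Fin n) (Fin n) ℝ) - S ^ 2).det :=
    Continuous.matrix_det (((continuous_const.mul continuous_id).smul continuous_const).sub
      continuous_const)
  have hdense : Dense {d : ℝ | d ≠ 0} := by
    simpa [Set.compl_singleton_eq] using dense_compl_singleton (0 : ℝ)
  exact congrFun (hc1.ext_on hdense hc2 fun t ht => key t ht) d

/-- `μ ⊗ Φ` sandwich identity. -/
lemma mu_sandwich {n1 n2 : ℕ} (μ1 : Fin n1 → ℝ) (μ2 : Fin n2 → ℝ)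
    (hμ1 : ∀ i, μ1 i * μ1 i = 1) (W : Matrix (Fin n2) (Fin n2) ℝ) :
    muBlock μ1 μ2 * (W ⊗ₖ (1 : Matrix (Fin n1) (Fin n1) ℝ)) * (muBlock μ1 μ2)ᵀ
      = (μ2 ⬝ᵥ (W *ᵥ μ2)) • 1 := by
  ext i i'
  simp only [Matrix.mul_apply, Matrix.transpose_apply, muBlock, Matrix.of_apply,
    Matrix.kroneckerMap_apply, Fintype.sum_prod_type, Matrix.diagonal_apply,
    Matrix.smul_apply, Matrix.one_apply, dotProduct, Matrix.mulVec, smul_eq_mul,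
    mul_ite, ite_mul, zero_mul, mul_zero, Finset.sum_ite_eq, Finset.sum_ite_eq',
    Finset.mem_univ, if_true]
  split_ifs with h
  · subst h
    simp only [Finset.sum_mul, Finset.mul_sum, mul_one]
    rw [Finset.sum_comm]
    refine Finset.sum_congr rfl fun a _ => Finset.sum_congr rfl fun b _ => ?_
    linear_combination μ2 a * W a b * μ2 b * hμ1 i
  · simp

/-- The degree matrix of the corona. -/
lemma deg_row {n1 n2 : ℕ} (r1 : ℝ) (S : Matrix (Fin n1) (Fin n1) ℝ)
    (A2 : Matrix (Fin n2) (Fin n2) ℝ) (μ1 : Fin n1 → ℝ) (μ2 : Fin n2 → ℝ)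
    (hμ1abs : ∀ i, |μ1 i| = 1) (hμ2abs : ∀ j, |μ2 j| = 1)
    (hSreg : ∀ i, ∑ j, |S i j| = r1) :
    degMat (coronaStar S A2 μ1 μ2) = Matrix.diagonal (Sum.elim
      (Sum.elim (fun _ => r1) (fun _ => r1 + (n2 : ℝ)))
      (fun p => 1 + ∑ j', |A2 p.1 j'|)) := by
  unfold degMat
  refine congrArg _ (funext fun i => ?_)
  rcases i with (a | a) | ⟨p, k⟩
  · simp [coronaStar, Fintype.sum_sum_type, hSreg]
  · have hcard : (Finset.filter (fun q : Fin n2 × Fin n1 => a = q.2) Finset.univ).card = n2 := by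
      rw [Finset.card_filter, Fintype.sum_prod_type]
      simp [Finset.sum_ite_eq]
    simp [coronaStar, Fintype.sum_sum_type, Fintype.sum_prod_type, muBlock, hSreg,
      abs_mul, hμ2abs, Matrix.diagonal_apply, apply_ite abs, Finset.sum_ite_eq, hμ1abs, hcard]
  · simp [coronaStar, Fintype.sum_sum_type, Fintype.sum_prod_type, muBlock,
      abs_mul, hμ2abs, Matrix.diagonal_apply, apply_ite abs, Finset.sum_ite_eq,
      Finset.sum_ite_eq', hμ1abs, Matrix.one_apply, Finset.mul_sum, Finset.sum_mul]

/-- Block structure of `x·I − Q(Γ₁⊛Γ₂)`. -/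
lemma struct_eq {n1 n2 : ℕ} (x r1 : ℝ) (S : Matrix (Fin n1) (Fin n1) ℝ)
    (A2 : Matrix (Fin n2) (Fin n2) ℝ) (μ1 : Fin n1 → ℝ) (μ2 : Fin n2 → ℝ)
    (hμ1abs : ∀ i, |μ1 i| = 1) (hμ2abs : ∀ j, |μ2 j| = 1)
    (hSreg : ∀ i, ∑ j, |S i j| = r1) :
    x • 1 - (degMat (coronaStar S A2 μ1 μ2) + coronaStar S A2 μ1 μ2)
      = Matrix.fromBlocks
          (Matrix.fromBlocks ((x - r1) • 1) (-S) (-S) ((x - r1 - (n2 : ℝ)) • 1))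
          (Matrix.fromRows 0 (-(muBlock μ1 μ2)))
          (Matrix.fromCols 0 (-(muBlock μ1 μ2)ᵀ))
          (((x - 1) • (1 : Matrix (Fin n2) (Fin n2) ℝ) - (degMat A2 + A2)) ⊗ₖ
            (1 : Matrix (Fin n1) (Fin n1) ℝ)) := by
  rw [deg_row r1 S A2 μ1 μ2 hμ1abs hμ2abs hSreg]
  ext i j
  rcases i with (a | a) | ⟨p, k⟩ <;> rcases j with (b | b) | ⟨q, l⟩ <;>
    simp [coronaStar, degMat, Matrix.one_apply, Matrix.diagonal_apply, Prod.ext_iff,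
      Matrix.sub_apply, Matrix.add_apply, Matrix.smul_apply, smul_eq_mul, mul_ite,
      ite_and]
  all_goals split_ifs <;> ring

/-- For `Γ₁` an `r₁`-regular signed graph on `n₁` vertices and `Γ₂` arbitrary
on `n₂` vertices, for every real `x` with `(x−1)·I − Q(Γ₂)` invertible,
`det(x·I − Q(Γ₁⊛Γ₂)) = det((x−1)·I − Q(Γ₂))^{n₁} · det((x−r₁)(x−r₁−n₂−χ_{Q(Γ₂)}(x−1))·I_{n₁} − A₁μ²)`. -/
theorem corona_signless_laplacian_charpoly (n1 n2 : ℕ) (r1 : ℝ)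
    (A1 : Matrix (Fin n1) (Fin n1) ℝ) (hA1sym : A1.IsSymm) (hA1diag : ∀ i, A1 i i = 0)
    (hA1ent : ∀ i j, A1 i j = 1 ∨ A1 i j = 0 ∨ A1 i j = -1)
    (μ1 : Fin n1 → ℝ) (hμ1 : ∀ i, μ1 i = 1 ∨ μ1 i = -1)
    (hreg : ∀ i, ∑ j, |A1 i j| = r1)
    (A2 : Matrix (Fin n2) (Fin n2) ℝ) (hA2sym : A2.IsSymm) (hA2diag : ∀ i, A2 i i = 0)
    (hA2ent : ∀ i j, A2 i j = 1 ∨ A2 i j = 0 ∨ A2 i j = -1)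
    (μ2 : Fin n2 → ℝ) (hμ2 : ∀ i, μ2 i = 1 ∨ μ2 i = -1)
    (x : ℝ)
    (hx : IsUnit ((x - 1) • (1 : Matrix (Fin n2) (Fin n2) ℝ) - (degMat A2 + A2)).det) :
    (x • 1 -
        (degMat (coronaStar (Matrix.diagonal μ1 * A1.map abs * Matrix.diagonal μ1) A2 μ1 μ2)
          + coronaStar (Matrix.diagonal μ1 * A1.map abs * Matrix.diagonal μ1) A2 μ1 μ2)).det
      = ((x - 1) • (1 : Matrix (Fin n2) (Fin n2) ℝ) - (degMat A2 + A2)).det ^ n1 *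
        (((x - r1) * (x - r1 - (n2 : ℝ) - coronal (degMat A2 + A2) μ2 (x - 1))) •
            (1 : Matrix (Fin n1) (Fin n1) ℝ)
          - (Matrix.diagonal μ1 * A1.map abs * Matrix.diagonal μ1) ^ 2).det := by
  set S := Matrix.diagonal μ1 * A1.map abs * Matrix.diagonal μ1 with hS
  have hμ1abs : ∀ i, |μ1 i| = 1 := fun i => by rcases hμ1 i with h | h <;> rw [h] <;> simp
  have hμ2abs : ∀ j, |μ2 j| = 1 := fun j => by rcases hμ2 j with h | h <;> rw [h] <;> simp
  have hμ1sq : ∀ i, μ1 i * μ1 i = 1 := fun i => by rcases hμ1 i with h | h <;> rw [h] <;> norm_num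
  have hSreg : ∀ i, ∑ j, |S i j| = r1 := by
    intro i
    have hent : ∀ j, |S i j| = |A1 i j| := by
      intro j
      rw [hS, Matrix.mul_diagonal, Matrix.diagonal_mul, Matrix.map_apply]
      rw [abs_mul, abs_mul, hμ1abs, hμ1abs, abs_abs, one_mul, mul_one]
    rw [Finset.sum_congr rfl fun j _ => hent j]
    exact hreg i
  rw [struct_eq x r1 S A2 μ1 μ2 hμ1abs hμ2abs hSreg]
  haveI : Invertible (((x - 1) • (1 : Matrix (Fin n2) (Fin n2) ℝ) - (degMat A2 + A2)) ⊗ₖ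
      (1 : Matrix (Fin n1) (Fin n1) ℝ)) := by
    apply Matrix.invertibleOfIsUnitDet
    rw [Matrix.det_kronecker]
    simpa using hx.pow n1
  rw [Matrix.det_fromBlocks₂₂]
  have hSchur : Matrix.fromRows (0 : Matrix (Fin n1) (Fin n2 × Fin n1) ℝ) (-(muBlock μ1 μ2)) *
        ⅟(((x - 1) • (1 : Matrix (Fin n2) (Fin n2) ℝ) - (degMat A2 + A2)) ⊗ₖ
          (1 : Matrix (Fin n1) (Fin n1) ℝ)) *
        Matrix.fromCols (0 : Matrix (Fin n2 × Fin n1) (Fin n1) ℝ) (-(muBlock μ1 μ2)ᵀ)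
      = Matrix.fromBlocks (0 : Matrix (Fin n1) (Fin n1) ℝ) 0 0
          ((μ2 ⬝ᵥ (((x - 1) • (1 : Matrix (Fin n2) (Fin n2) ℝ) - (degMat A2 + A2))⁻¹ *ᵥ μ2)) • 1) := by
    have hone : (1 : Matrix (Fin n1) (Fin n1) ℝ)⁻¹ = 1 := Matrix.inv_eq_right_inv (by simp)
    rw [Matrix.invOf_eq_nonsing_inv, Matrix.inv_kronecker, hone]
    rw [← mu_sandwich μ1 μ2 hμ1sq ((x - 1) • (1 : Matrix (Fin n2) (Fin n2) ℝ) - (degMat A2 + A2))⁻¹]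
    simp only [Matrix.fromRows_mul, Matrix.mul_fromCols, Matrix.zero_mul,
      Matrix.mul_zero, Matrix.neg_mul, Matrix.mul_neg, neg_neg,
      Matrix.fromRows_fromCols_eq_fromBlocks]
    ext (i | i) (j | j) <;> simp
  rw [hSchur]
  have hχ : (μ2 ⬝ᵥ (((x - 1) • (1 : Matrix (Fin n2) (Fin n2) ℝ) - (degMat A2 + A2))⁻¹ *ᵥ μ2))
      = coronal (degMat A2 + A2) μ2 (x - 1) := rfl
  have hsub : Matrix.fromBlocks ((x - r1) • (1 : Matrix (Fin n1) (Fin n1) ℝ)) (-S) (-S)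
        ((x - r1 - (n2 : ℝ)) • 1) -
        Matrix.fromBlocks (0 : Matrix (Fin n1) (Fin n1) ℝ) 0 0
          ((μ2 ⬝ᵥ (((x - 1) • (1 : Matrix (Fin n2) (Fin n2) ℝ) - (degMat A2 + A2))⁻¹ *ᵥ μ2)) • 1)
      = Matrix.fromBlocks ((x - r1) • 1) (-S) (-S)
        ((x - r1 - (n2 : ℝ) - coronal (degMat A2 + A2) μ2 (x - 1)) • 1) := by
    rw [← hχ]
    ext (i | i) (j | j) <;>
      simp [Matrix.sub_apply, sub_smul, Matrix.smul_apply, Matrix.one_apply] <;> ring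
  rw [hsub, det_two_block, Matrix.det_kronecker]
  simp
end

section
/- Let Γ1 and Γ2 be r-regular signed graphs of the same order n with adjacency matrices A1, A2 and markings μ1, μ2 such that the μ-signed adjacency matrices Φ1·|A1|·Φ1 and Φ2·|A2|·Φ2 have the same characteristic polynomial. Then for every signed graph Γ (with marking), the signless Laplacian matrices Q(Γ1⊛Γ) and Q(Γ2⊛Γ) have the same characteristic polynomial, i.e., Γ1⊛Γ and Γ2⊛Γ are signless Laplacian cospectral. -/
open Matrix Kronecker BigOperators

open Polynomial

lemma charpoly_of_comm {I : Type} [Fintype I] [DecidableEq I]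
    (W M N : Matrix I I ℝ) (hW : W.det ≠ 0) (h : W * M = N * W) :
    M.charpoly = N.charpoly := by
  have key : (C : ℝ →+* ℝ[X]).mapMatrix W * charmatrix M
      = charmatrix N * (C : ℝ →+* ℝ[X]).mapMatrix W := by
    rw [charmatrix, charmatrix, mul_sub, sub_mul, ← _root_.map_mul, ← _root_.map_mul, h]
    congr 1
    exact (Matrix.scalar_commute X (fun r => Commute.all X r) _).symm
  have hdet := congrArg Matrix.det key
  rw [det_mul, det_mul] at hdet
  have hd : ((C : ℝ →+* ℝ[X]).mapMatrix W).det = C W.det :=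
    ((C : ℝ →+* ℝ[X]).map_det W).symm
  rw [hd, mul_comm (charmatrix N).det _] at hdet
  have hC : (C W.det : ℝ[X]) ≠ 0 := by simpa using hW
  exact mul_left_cancel₀ hC hdet

lemma charpoly_diagonal {I : Type} [Fintype I] [DecidableEq I] (d : I → ℝ) :
    (Matrix.diagonal d).charpoly = ∏ i, (X - C (d i)) := by
  have : charmatrix (Matrix.diagonal d) = Matrix.diagonal (fun i => X - C (d i)) := by
    ext i j
    by_cases h : i = j
    · subst h; simp
    · simp [charmatrix_apply, Matrix.diagonal_apply_ne _ h, h]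
  rw [Matrix.charpoly, this, det_diagonal]

lemma exists_comp_perm_eq {k : ℕ} (f g : Fin k → ℝ)
    (h : Multiset.map f Finset.univ.val = Multiset.map g Finset.univ.val) :
    ∃ e : Equiv.Perm (Fin k), f = g ∘ e := by
  have hof : ∀ u : Fin k → ℝ, (↑(List.ofFn u) : Multiset ℝ) = Multiset.map u Finset.univ.val := by
    intro u
    rw [List.ofFn_eq_map]
    rfl
  have hperm0 : (List.ofFn f).Perm (List.ofFn g) := by
    rw [← Multiset.coe_eq_coe, hof, hof]; exact h
  have hperm : (List.ofFn (f ∘ Tuple.sort f)).Perm (List.ofFn (g ∘ Tuple.sort g)) :=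
    ((Tuple.sort f).ofFn_comp_perm f).trans
      (hperm0.trans ((Tuple.sort g).ofFn_comp_perm g).symm)
  have heq : List.ofFn (f ∘ Tuple.sort f) = List.ofFn (g ∘ Tuple.sort g) :=
    List.Perm.eq_of_sortedLE (Tuple.monotone_sort f).sortedLE_ofFn
      (Tuple.monotone_sort g).sortedLE_ofFn hperm
  have hfg : f ∘ Tuple.sort f = g ∘ Tuple.sort g := by
    have := List.ofFn_injective heq
    exact this
  refine ⟨(Tuple.sort f)⁻¹.trans (Tuple.sort g), ?_⟩
  funext i
  have := congrFun hfg ((Tuple.sort f)⁻¹ i)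
  simpa using this

lemma similar_of_cospectral {k : ℕ} (M N : Matrix (Fin k) (Fin k) ℝ)
    (hM : M.IsHermitian) (hN : N.IsHermitian) (h : M.charpoly = N.charpoly) :
    ∃ W : Matrix (Fin k) (Fin k) ℝ, W.det ≠ 0 ∧ W * N = M * W := by
  classical
  set V1 : Matrix (Fin k) (Fin k) ℝ := (hM.eigenvectorUnitary : Matrix (Fin k) (Fin k) ℝ) with hV1def
  set V2 : Matrix (Fin k) (Fin k) ℝ := (hN.eigenvectorUnitary : Matrix (Fin k) (Fin k) ℝ) with hV2def
  have hV1u : star V1 * V1 = 1 := Unitary.star_mul_self_of_mem hM.eigenvectorUnitary.2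
  have hV1u' : V1 * star V1 = 1 := Unitary.mul_star_self_of_mem hM.eigenvectorUnitary.2
  have hV2u : star V2 * V2 = 1 := Unitary.star_mul_self_of_mem hN.eigenvectorUnitary.2
  have hV2u' : V2 * star V2 = 1 := Unitary.mul_star_self_of_mem hN.eigenvectorUnitary.2
  have hsp1 : M = V1 * Matrix.diagonal hM.eigenvalues * star V1 := by
    have := hM.spectral_theorem
    simpa using this
  have hsp2 : N = V2 * Matrix.diagonal hN.eigenvalues * star V2 := by
    have := hN.spectral_theorem
    simpa using this
  -- determinants of unitaries are nonzero
  have hdV1 : V1.det ≠ 0 := by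
    intro h0
    have := congrArg Matrix.det hV1u'
    rw [det_mul, h0] at this
    simp at this
  have hdV2 : V2.det ≠ 0 := by
    intro h0
    have := congrArg Matrix.det hV2u'
    rw [det_mul, h0] at this
    simp at this
  have hdV1s : (star V1).det ≠ 0 := by
    intro h0
    have := congrArg Matrix.det hV1u'
    rw [det_mul, h0] at this
    simp at this
  have hdV2s : (star V2).det ≠ 0 := by
    intro h0
    have := congrArg Matrix.det hV2u'
    rw [det_mul, h0] at this
    simp at this
  -- charpoly of M equals charpoly of its eigenvalue diagonal
  have hc1 : (Matrix.diagonal hM.eigenvalues).charpoly = M.charpoly := by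
    apply charpoly_of_comm V1 _ _ hdV1
    calc V1 * Matrix.diagonal hM.eigenvalues
        = V1 * Matrix.diagonal hM.eigenvalues * (star V1 * V1) := by rw [hV1u, mul_one]
      _ = (V1 * Matrix.diagonal hM.eigenvalues * star V1) * V1 := by
          simp only [mul_assoc]
      _ = M * V1 := by rw [← hsp1]
  have hc2 : (Matrix.diagonal hN.eigenvalues).charpoly = N.charpoly := by
    apply charpoly_of_comm V2 _ _ hdV2
    calc V2 * Matrix.diagonal hN.eigenvalues
        = V2 * Matrix.diagonal hN.eigenvalues * (star V2 * V2) := by rw [hV2u, mul_one]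
      _ = (V2 * Matrix.diagonal hN.eigenvalues * star V2) * V2 := by
          simp only [mul_assoc]
      _ = N * V2 := by rw [← hsp2]
  -- equal multisets of eigenvalues
  have hprod : ∏ i, (X - C (hM.eigenvalues i)) = ∏ i, (X - C (hN.eigenvalues i)) := by
    rw [← _root_.charpoly_diagonal, ← _root_.charpoly_diagonal, hc1, hc2, h]
  have hms : Multiset.map hM.eigenvalues Finset.univ.val
      = Multiset.map hN.eigenvalues Finset.univ.val := by
    have hr : ∀ u : Fin k → ℝ,
        (∏ i, (X - C (u i))).roots = Multiset.map u Finset.univ.val := by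
      intro u
      have : (∏ i, (X - C (u i)))
          = ((Multiset.map u Finset.univ.val).map fun a => X - C a).prod := by
        rw [Multiset.map_map]
        rfl
      rw [this, roots_multiset_prod_X_sub_C]
    rw [← hr, ← hr, hprod]
  obtain ⟨e, he⟩ := exists_comp_perm_eq hM.eigenvalues hN.eigenvalues hms
  -- permutation matrix
  set P : Matrix (Fin k) (Fin k) ℝ := e.toPEquiv.toMatrix with hPdef
  have hPdet : P.det ≠ 0 := by
    have : P.det = (Equiv.Perm.sign e : ℝ) := Matrix.det_permutation e
    rw [this]
    rcases Int.units_eq_one_or (Equiv.Perm.sign e) with hs | hs <;> rw [hs] <;> norm_num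
  have hPD : P * Matrix.diagonal hN.eigenvalues = Matrix.diagonal hM.eigenvalues * P := by
    rw [hPdef, PEquiv.toMatrix_toPEquiv_mul, PEquiv.mul_toMatrix_toPEquiv]
    ext i j
    by_cases hij : e i = j
    · have hij' : i = e.symm j := by simp [← hij]
      simp [Matrix.submatrix_apply, hij, ← hij', Matrix.diagonal_apply_eq,
        congrFun he i, Function.comp]
    · have hij' : i ≠ e.symm j := fun hc => hij (by simp [hc])
      simp [Matrix.submatrix_apply, Matrix.diagonal_apply_ne _ hij,
        Matrix.diagonal_apply_ne _ hij']
  refine ⟨V1 * P * star V2, ?_, ?_⟩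
  · rw [det_mul, det_mul]
    exact mul_ne_zero (mul_ne_zero hdV1 hPdet) hdV2s
  · calc V1 * P * star V2 * N
        = V1 * P * star V2 * (V2 * Matrix.diagonal hN.eigenvalues * star V2) := by rw [← hsp2]
      _ = V1 * (P * ((star V2 * V2) * Matrix.diagonal hN.eigenvalues)) * star V2 := by
          simp only [mul_assoc]
      _ = V1 * (P * Matrix.diagonal hN.eigenvalues) * star V2 := by rw [hV2u, one_mul]
      _ = V1 * (Matrix.diagonal hM.eigenvalues * P) * star V2 := by rw [hPD]
      _ = (V1 * Matrix.diagonal hM.eigenvalues * star V1) * (V1 * (P * star V2)) := by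
          rw [show V1 * (Matrix.diagonal hM.eigenvalues * P) * star V2
              = V1 * Matrix.diagonal hM.eigenvalues * ((star V1 * V1) * (P * star V2)) by
            rw [hV1u, one_mul]; simp only [mul_assoc]]
          simp only [mul_assoc]
      _ = M * (V1 * P * star V2) := by rw [← hsp1]; simp only [mul_assoc]

section PerGraph
variable {n m : ℕ}

noncomputable def wfun (m : ℕ) (μ : Fin n → ℝ) : (Fin n ⊕ Fin n) ⊕ Fin m × Fin n → ℝ :=
  Sum.elim (Sum.elim μ μ) (fun _ => 1)

lemma signConj (A : Matrix (Fin n) (Fin n) ℝ) (B : Matrix (Fin m) (Fin m) ℝ)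
    (μ : Fin n → ℝ) (ν : Fin m → ℝ) (hμ : ∀ i, μ i * μ i = 1) :
    Matrix.diagonal (wfun m μ) * coronaStar (A.map abs) B (fun _ => 1) ν
      = coronaStar (Matrix.diagonal μ * A.map abs * Matrix.diagonal μ) B μ ν
        * Matrix.diagonal (wfun m μ) := by
  have hμ' : ∀ i x, μ i * (μ i * x) = x := fun i x => by rw [← mul_assoc, hμ, one_mul]
  ext a b
  rw [Matrix.diagonal_mul, Matrix.mul_diagonal]
  rcases a with (i | i) | ⟨k, i⟩ <;> rcases b with (j | j) | ⟨k', j⟩ <;>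
      simp [coronaStar, muBlock, wfun, Matrix.diagonal_mul, Matrix.mul_diagonal,
        Matrix.fromRows_apply_inl, Matrix.fromRows_apply_inr,
        Matrix.fromCols_apply_inl, Matrix.fromCols_apply_inr]
  all_goals
    first
    | rfl
    | (by_cases hij : i = j
       · subst hij
         simp [hμ', Matrix.one_apply, Matrix.diagonal_apply_eq, mul_comm, mul_left_comm]
       · simp [hμ', Matrix.one_apply, Matrix.diagonal_apply_ne, hij, Ne.symm hij,
           mul_comm, mul_left_comm])
end PerGraph

lemma degMat_coronaStar {n m : ℕ} (r : ℝ) (A : Matrix (Fin n) (Fin n) ℝ)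
    (B : Matrix (Fin m) (Fin m) ℝ) (ν : Fin m → ℝ)
    (hA : ∀ i, ∑ j, |A i j| = r) (hν : ∀ k, |ν k| = 1) :
    degMat (coronaStar (A.map abs) B (fun _ => 1) ν)
      = Matrix.diagonal (Sum.elim (Sum.elim (fun _ : Fin n => r) (fun _ : Fin n => r + m))
          (fun p : Fin m × Fin n => (∑ j, |B p.1 j|) + 1)) := by
  unfold degMat
  refine congrArg Matrix.diagonal (funext fun a => ?_)
  rcases a with (i | i) | ⟨k, i⟩
  · simp [coronaStar, muBlock, Fintype.sum_sum_type, Fintype.sum_prod_type, abs_abs,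
      Matrix.fromRows_apply_inl, Matrix.fromCols_apply_inl, hA]
  · simp [coronaStar, muBlock, Fintype.sum_sum_type, Fintype.sum_prod_type, abs_abs,
      Matrix.fromRows_apply_inr, Matrix.fromCols_apply_inl, abs_mul, hν,
      Matrix.diagonal_apply, apply_ite abs, Finset.sum_ite_eq, hA]
    have : Finset.filter (fun x : Fin m × Fin n => i = x.2) Finset.univ
        = Finset.univ ×ˢ {i} := by
      ext ⟨a, b⟩
      simp [eq_comm]
    rw [this, Finset.card_product]
    simp
  · simp [coronaStar, muBlock, Fintype.sum_sum_type, Fintype.sum_prod_type, abs_abs,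
      Matrix.fromRows_apply_inr, Matrix.fromCols_apply_inl, Matrix.fromCols_apply_inr,
      abs_mul, hν, Matrix.diagonal_apply, Matrix.one_apply, apply_ite abs,
      Finset.sum_ite_eq, Finset.sum_ite_eq', add_comm]

lemma degMat_eq_of_abs_eq {V : Type} [Fintype V] [DecidableEq V] (X Y : Matrix V V ℝ)
    (h : ∀ a b, |X a b| = |Y a b|) : degMat X = degMat Y := by
  unfold degMat
  exact congrArg Matrix.diagonal (funext fun a => by simp [h])

lemma degMat_coronaStar_sign {n m : ℕ} (A : Matrix (Fin n) (Fin n) ℝ)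
    (B : Matrix (Fin m) (Fin m) ℝ) (μ : Fin n → ℝ) (ν : Fin m → ℝ)
    (hμ : ∀ i, |μ i| = 1) :
    degMat (coronaStar (Matrix.diagonal μ * A.map abs * Matrix.diagonal μ) B μ ν)
      = degMat (coronaStar (A.map abs) B (fun _ => 1) ν) := by
  apply degMat_eq_of_abs_eq
  intro a b
  rcases a with (i | i) | ⟨k, i⟩ <;> rcases b with (j | j) | ⟨k', j⟩ <;>
      simp [coronaStar, muBlock, Matrix.diagonal_mul, Matrix.mul_diagonal,
        Matrix.fromRows_apply_inl, Matrix.fromRows_apply_inr, abs_mul, hμ,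
        Matrix.fromCols_apply_inl, Matrix.fromCols_apply_inr, abs_abs] <;>
    by_cases hij : i = j <;>
      simp [hij, Matrix.diagonal_apply_eq, Matrix.diagonal_apply_ne, hμ,
        Matrix.diagonal_apply, apply_ite abs, abs_mul, Matrix.one_apply, eq_comm]

lemma muBlock_comm {n m : ℕ} (W : Matrix (Fin n) (Fin n) ℝ) (ν : Fin m → ℝ) :
    @HMul.hMul _ _ (Matrix (Fin n) (Fin m × Fin n) ℝ) Matrix.instHMulOfFintypeOfMulOfAddCommMonoid W (muBlock (fun _ => (1 : ℝ)) ν)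
      = @HMul.hMul _ _ (Matrix (Fin n) (Fin m × Fin n) ℝ) Matrix.instHMulOfFintypeOfMulOfAddCommMonoid (muBlock (fun _ => (1 : ℝ)) ν)
        ((1 : Matrix (Fin m) (Fin m) ℝ) ⊗ₖ W) := by
  ext i ⟨k, j⟩
  simp [Matrix.mul_apply, muBlock, Fintype.sum_prod_type, Matrix.diagonal_apply,
    Matrix.one_apply, mul_ite, ite_mul, mul_zero, zero_mul, Finset.sum_ite_eq,
    Finset.sum_ite_eq', mul_comm]

lemma muBlockT_comm {n m : ℕ} (W : Matrix (Fin n) (Fin n) ℝ) (ν : Fin m → ℝ) :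
    @HMul.hMul _ _ (Matrix (Fin m × Fin n) (Fin n) ℝ) Matrix.instHMulOfFintypeOfMulOfAddCommMonoid
        ((1 : Matrix (Fin m) (Fin m) ℝ) ⊗ₖ W) (muBlock (fun _ => (1 : ℝ)) ν)ᵀ
      = @HMul.hMul _ _ (Matrix (Fin m × Fin n) (Fin n) ℝ) Matrix.instHMulOfFintypeOfMulOfAddCommMonoid (muBlock (fun _ => (1 : ℝ)) ν)ᵀ W := by
  ext ⟨k, i⟩ j
  simp [Matrix.mul_apply, muBlock, Fintype.sum_prod_type, Matrix.diagonal_apply,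
    Matrix.one_apply, mul_ite, ite_mul, mul_zero, zero_mul, Finset.sum_ite_eq,
    Finset.sum_ite_eq', mul_comm]

lemma bigW_comm {n m : ℕ} (W M1 M2 : Matrix (Fin n) (Fin n) ℝ)
    (B : Matrix (Fin m) (Fin m) ℝ) (ν : Fin m → ℝ) (hW : W * M2 = M1 * W) :
    Matrix.fromBlocks (Matrix.fromBlocks W 0 0 W) 0 0
        ((1 : Matrix (Fin m) (Fin m) ℝ) ⊗ₖ W) * coronaStar M2 B (fun _ => 1) ν
      = coronaStar M1 B (fun _ => 1) ν * Matrix.fromBlocks (Matrix.fromBlocks W 0 0 W) 0 0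
        ((1 : Matrix (Fin m) (Fin m) ℝ) ⊗ₖ W) := by
  unfold coronaStar
  rw [Matrix.fromBlocks_multiply]
  conv_rhs => rw [Matrix.fromBlocks_multiply]
  have h11 : Matrix.fromBlocks W 0 0 W * Matrix.fromBlocks 0 M2 M2 0
      = Matrix.fromBlocks 0 M1 M1 0 * Matrix.fromBlocks W 0 0 W := by
    rw [Matrix.fromBlocks_multiply, Matrix.fromBlocks_multiply]
    simp [hW]
  have h12 : Matrix.fromBlocks W 0 0 W
        * Matrix.fromRows (0 : Matrix (Fin n) (Fin m × Fin n) ℝ) (muBlock (fun _ => 1) ν)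
      = Matrix.fromRows (0 : Matrix (Fin n) (Fin m × Fin n) ℝ) (muBlock (fun _ => 1) ν)
        * ((1 : Matrix (Fin m) (Fin m) ℝ) ⊗ₖ W) := by
    rw [Matrix.fromBlocks_mul_fromRows, Matrix.fromRows_mul]
    simp [muBlock_comm]
  have h21 : ((1 : Matrix (Fin m) (Fin m) ℝ) ⊗ₖ W)
        * Matrix.fromCols (0 : Matrix (Fin m × Fin n) (Fin n) ℝ) (muBlock (fun _ => 1) ν)ᵀ
      = Matrix.fromCols (0 : Matrix (Fin m × Fin n) (Fin n) ℝ) (muBlock (fun _ => 1) ν)ᵀ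
        * Matrix.fromBlocks W 0 0 W := by
    rw [Matrix.mul_fromCols, Matrix.fromCols_mul_fromBlocks]
    simp [muBlockT_comm]
  have h22 : ((1 : Matrix (Fin m) (Fin m) ℝ) ⊗ₖ W)
        * (B ⊗ₖ (1 : Matrix (Fin n) (Fin n) ℝ))
      = (B ⊗ₖ (1 : Matrix (Fin n) (Fin n) ℝ))
        * ((1 : Matrix (Fin m) (Fin m) ℝ) ⊗ₖ W) := by
    rw [← Matrix.mul_kronecker_mul, ← Matrix.mul_kronecker_mul]
    simp
  simp only [Matrix.zero_mul, Matrix.mul_zero, add_zero, zero_add]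
  rw [h11, h12, h21, h22]

lemma diag_comm_bigW {n m : ℕ} (r s : ℝ) (c : Fin m → ℝ) (W : Matrix (Fin n) (Fin n) ℝ) :
    Matrix.diagonal (Sum.elim (Sum.elim (fun _ : Fin n => r) (fun _ : Fin n => s))
        (fun p : Fin m × Fin n => c p.1))
      * Matrix.fromBlocks (Matrix.fromBlocks W 0 0 W) 0 0
        ((1 : Matrix (Fin m) (Fin m) ℝ) ⊗ₖ W)
    = Matrix.fromBlocks (Matrix.fromBlocks W 0 0 W) 0 0
        ((1 : Matrix (Fin m) (Fin m) ℝ) ⊗ₖ W)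
      * Matrix.diagonal (Sum.elim (Sum.elim (fun _ : Fin n => r) (fun _ : Fin n => s))
        (fun p : Fin m × Fin n => c p.1)) := by
  ext a b
  rw [Matrix.diagonal_mul, Matrix.mul_diagonal]
  rcases a with (i | i) | ⟨k, i⟩ <;> rcases b with (j | j) | ⟨k', j⟩ <;>
    simp [Matrix.one_apply, mul_comm]
  by_cases hkk : k = k' <;> simp [hkk, mul_comm]

/-- If `Γ₁, Γ₂` are `r`-regular of the same order `n` and their `μ`-signed
adjacency matrices are cospectral, then for every signed graph `Γ`, `Γ₁⊛Γ` and `Γ₂⊛Γ` are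
signless Laplacian cospectral. -/
theorem corona_Q_cospectral_left (n : ℕ) (r : ℝ)
    (A1 : Matrix (Fin n) (Fin n) ℝ) (hA1sym : A1.IsSymm) (hA1diag : ∀ i, A1 i i = 0)
    (hA1ent : ∀ i j, A1 i j = 1 ∨ A1 i j = 0 ∨ A1 i j = -1)
    (μ1 : Fin n → ℝ) (hμ1 : ∀ i, μ1 i = 1 ∨ μ1 i = -1)
    (hreg1 : ∀ i, ∑ j, |A1 i j| = r)
    (A2 : Matrix (Fin n) (Fin n) ℝ) (hA2sym : A2.IsSymm) (hA2diag : ∀ i, A2 i i = 0)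
    (hA2ent : ∀ i j, A2 i j = 1 ∨ A2 i j = 0 ∨ A2 i j = -1)
    (μ2 : Fin n → ℝ) (hμ2 : ∀ i, μ2 i = 1 ∨ μ2 i = -1)
    (hreg2 : ∀ i, ∑ j, |A2 i j| = r)
    (hcospec : (Matrix.diagonal μ1 * A1.map abs * Matrix.diagonal μ1).charpoly
      = (Matrix.diagonal μ2 * A2.map abs * Matrix.diagonal μ2).charpoly)
    (m : ℕ) (B : Matrix (Fin m) (Fin m) ℝ) (hBsym : B.IsSymm) (hBdiag : ∀ i, B i i = 0)
    (hBent : ∀ i j, B i j = 1 ∨ B i j = 0 ∨ B i j = -1)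
    (ν : Fin m → ℝ) (hν : ∀ i, ν i = 1 ∨ ν i = -1) :
    (degMat (coronaStar (Matrix.diagonal μ1 * A1.map abs * Matrix.diagonal μ1) B μ1 ν)
        + coronaStar (Matrix.diagonal μ1 * A1.map abs * Matrix.diagonal μ1) B μ1 ν).charpoly
      = (degMat (coronaStar (Matrix.diagonal μ2 * A2.map abs * Matrix.diagonal μ2) B μ2 ν)
        + coronaStar (Matrix.diagonal μ2 * A2.map abs * Matrix.diagonal μ2) B μ2 ν).charpoly := by
  classical
  -- basic facts about the signs
  have hμ1sq : ∀ i, μ1 i * μ1 i = 1 := fun i => by rcases hμ1 i with h | h <;> rw [h] <;> norm_num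
  have hμ2sq : ∀ i, μ2 i * μ2 i = 1 := fun i => by rcases hμ2 i with h | h <;> rw [h] <;> norm_num
  have hμ1abs : ∀ i, |μ1 i| = 1 := fun i => by rcases hμ1 i with h | h <;> rw [h] <;> norm_num
  have hμ2abs : ∀ i, |μ2 i| = 1 := fun i => by rcases hμ2 i with h | h <;> rw [h] <;> norm_num
  have hνabs : ∀ k, |ν k| = 1 := fun k => by rcases hν k with h | h <;> rw [h] <;> norm_num
  have hμ1ne : ∀ i, μ1 i ≠ 0 := fun i => by rcases hμ1 i with h | h <;> rw [h] <;> norm_num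
  have hμ2ne : ∀ i, μ2 i ≠ 0 := fun i => by rcases hμ2 i with h | h <;> rw [h] <;> norm_num
  set M1 := Matrix.diagonal μ1 * A1.map abs * Matrix.diagonal μ1 with hM1def
  set M2 := Matrix.diagonal μ2 * A2.map abs * Matrix.diagonal μ2 with hM2def
  set C1 := coronaStar M1 B μ1 ν with hC1def
  set C2 := coronaStar M2 B μ2 ν with hC2def
  set C1p := coronaStar (A1.map abs) B (fun _ => 1) ν with hC1pdef
  set C2p := coronaStar (A2.map abs) B (fun _ => 1) ν with hC2pdef
  -- the common degree function
  set dfun : (Fin n ⊕ Fin n) ⊕ Fin m × Fin n → ℝ :=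
    Sum.elim (Sum.elim (fun _ : Fin n => r) (fun _ : Fin n => r + m))
      (fun p : Fin m × Fin n => (∑ j, |B p.1 j|) + 1) with hdfun
  have habs1 : ∀ i, ∑ j, |A1 i j| = r := hreg1
  have hdeg1 : degMat C1 = Matrix.diagonal dfun := by
    rw [hC1def, hM1def, degMat_coronaStar_sign A1 B μ1 ν hμ1abs,
      degMat_coronaStar r A1 B ν hreg1 hνabs]
  have hdeg2 : degMat C2 = Matrix.diagonal dfun := by
    rw [hC2def, hM2def, degMat_coronaStar_sign A2 B μ2 ν hμ2abs,
      degMat_coronaStar r A2 B ν hreg2 hνabs]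
  -- step 1 : sign conjugation
  have hw1det : (Matrix.diagonal (wfun m μ1)).det ≠ 0 := by
    rw [Matrix.det_diagonal]
    apply Finset.prod_ne_zero_iff.2
    intro a _
    rcases a with (i | i) | p <;> simp [wfun, hμ1ne]
  have hw2det : (Matrix.diagonal (wfun m μ2)).det ≠ 0 := by
    rw [Matrix.det_diagonal]
    apply Finset.prod_ne_zero_iff.2
    intro a _
    rcases a with (i | i) | p <;> simp [wfun, hμ2ne]
  have hstep1 : (Matrix.diagonal dfun + C1p).charpoly = (degMat C1 + C1).charpoly := by
    apply charpoly_of_comm (Matrix.diagonal (wfun m μ1)) _ _ hw1det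
    rw [mul_add, add_mul, ← hdeg1]
    congr 1
    · rw [hdeg1, Matrix.diagonal_mul_diagonal, Matrix.diagonal_mul_diagonal]
      exact congrArg _ (funext fun a => mul_comm _ _)
    · rw [hC1pdef, hC1def, hM1def]
      exact signConj A1 B μ1 ν hμ1sq
  have hstep2 : (Matrix.diagonal dfun + C2p).charpoly = (degMat C2 + C2).charpoly := by
    apply charpoly_of_comm (Matrix.diagonal (wfun m μ2)) _ _ hw2det
    rw [mul_add, add_mul, ← hdeg2]
    congr 1
    · rw [hdeg2, Matrix.diagonal_mul_diagonal, Matrix.diagonal_mul_diagonal]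
      exact congrArg _ (funext fun a => mul_comm _ _)
    · rw [hC2pdef, hC2def, hM2def]
      exact signConj A2 B μ2 ν hμ2sq
  -- cospectrality of the absolute value matrices
  have hd1 : (Matrix.diagonal μ1).det ≠ 0 := by
    rw [Matrix.det_diagonal]
    exact Finset.prod_ne_zero_iff.2 fun i _ => hμ1ne i
  have hd2 : (Matrix.diagonal μ2).det ≠ 0 := by
    rw [Matrix.det_diagonal]
    exact Finset.prod_ne_zero_iff.2 fun i _ => hμ2ne i
  have hconj1 : Matrix.diagonal μ1 * (A1.map abs) = M1 * Matrix.diagonal μ1 := by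
    rw [hM1def, mul_assoc, Matrix.diagonal_mul_diagonal]
    have : (fun i => μ1 i * μ1 i) = fun _ => (1 : ℝ) := funext hμ1sq
    rw [this, Matrix.diagonal_one, mul_one]
  have hconj2 : Matrix.diagonal μ2 * (A2.map abs) = M2 * Matrix.diagonal μ2 := by
    rw [hM2def, mul_assoc, Matrix.diagonal_mul_diagonal]
    have : (fun i => μ2 i * μ2 i) = fun _ => (1 : ℝ) := funext hμ2sq
    rw [this, Matrix.diagonal_one, mul_one]
  have hcabs : (A1.map abs).charpoly = (A2.map abs).charpoly := by
    rw [charpoly_of_comm (Matrix.diagonal μ1) (A1.map abs) M1 hd1 hconj1,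
      charpoly_of_comm (Matrix.diagonal μ2) (A2.map abs) M2 hd2 hconj2]
    exact hcospec
  -- Hermitian
  have hherm1 : (A1.map abs).IsHermitian := by
    ext i j
    simp only [Matrix.conjTranspose_apply, Matrix.map_apply, star_trivial]
    rw [show A1 j i = A1 i j from by conv_lhs => rw [← hA1sym, Matrix.transpose_apply]]
  have hherm2 : (A2.map abs).IsHermitian := by
    ext i j
    simp only [Matrix.conjTranspose_apply, Matrix.map_apply, star_trivial]
    rw [show A2 j i = A2 i j from by conv_lhs => rw [← hA2sym, Matrix.transpose_apply]]
  obtain ⟨W, hWdet, hWc⟩ := similar_of_cospectral (A1.map abs) (A2.map abs) hherm1 hherm2 hcabs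
  -- the big conjugating matrix
  set bW : Matrix ((Fin n ⊕ Fin n) ⊕ Fin m × Fin n) ((Fin n ⊕ Fin n) ⊕ Fin m × Fin n) ℝ :=
    Matrix.fromBlocks (Matrix.fromBlocks W 0 0 W) 0 0
      ((1 : Matrix (Fin m) (Fin m) ℝ) ⊗ₖ W) with hbWdef
  have hbWdet : bW.det ≠ 0 := by
    rw [hbWdef, Matrix.det_fromBlocks_zero₂₁, Matrix.det_fromBlocks_zero₂₁, Matrix.det_kronecker]
    simp only [Matrix.det_one, one_pow, one_mul]
    exact mul_ne_zero (mul_ne_zero hWdet hWdet) (pow_ne_zero _ hWdet)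
  have hstep3 : (Matrix.diagonal dfun + C2p).charpoly
      = (Matrix.diagonal dfun + C1p).charpoly := by
    apply charpoly_of_comm bW _ _ hbWdet
    rw [mul_add, add_mul]
    congr 1
    · rw [hbWdef, hdfun]
      exact (diag_comm_bigW r (r + m) (fun k => (∑ j, |B k j|) + 1) W).symm
    · rw [hbWdef, hC1pdef, hC2pdef]
      exact bigW_comm W (A1.map abs) (A2.map abs) B ν hWc
  rw [← hstep1, ← hstep2, hstep3]
end

section
/- Let Γ1 and Γ2 be signed graphs of the same order m with adjacency matrices A1, A2 and markings μ1, μ2 satisfying A1·μ1 = r·μ1 and A2·μ2 = r·μ2 for a common real r (as holds for r-regular signed graphs), such that A1 and A2 do not have the same characteristic polynomial and E(Γ1) = E(Γ2). Then for every signed graph Γ of order n ≥ 1 (with marking), the signed graphs Γ⊛Γ1 and Γ⊛Γ2 are non-cospectral and equienergetic: E(Γ⊛Γ1) = E(Γ⊛Γ2) and A(Γ⊛Γ1), A(Γ⊛Γ2) have different characteristic polynomials. -/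
open Matrix Kronecker BigOperators

/-- The energy of a signed graph: the sum of the absolute values of the eigenvalues (with
multiplicity) of its symmetric adjacency matrix, i.e. of the roots of its characteristic
polynomial. -/
noncomputable def energy {V : Type} [Fintype V] [DecidableEq V] (M : Matrix V V ℝ) : ℝ :=
  (M.charpoly.roots.map abs).sum

open Polynomial

lemma eval_charpoly' {V : Type*} [Fintype V] [DecidableEq V] (M : Matrix V V ℝ) (x : ℝ) :
    (M.charpoly).eval x = (x • (1 : Matrix V V ℝ) - M).det := by
  rw [Matrix.charpoly, ← Polynomial.coe_evalRingHom, RingHom.map_det]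
  congr 1
  ext i j
  by_cases h : i = j <;>
    simp [Matrix.charmatrix_apply, Matrix.diagonal_apply, h, Matrix.one_apply]

lemma muBlock_sandwich {n m : ℕ} (ν : Fin n → ℝ) (μ : Fin m → ℝ)
    (hν : ∀ i, ν i * ν i = 1) (W : Matrix (Fin m) (Fin m) ℝ) :
    muBlock ν μ * (W ⊗ₖ (1 : Matrix (Fin n) (Fin n) ℝ)) * (muBlock ν μ)ᵀ
      = (μ ⬝ᵥ (W *ᵥ μ)) • (1 : Matrix (Fin n) (Fin n) ℝ) := by
  ext i i'
  simp only [mul_apply, muBlock, of_apply, transpose_apply, kroneckerMap_apply, Matrix.smul_apply,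
    one_apply, dotProduct, mulVec, Fintype.sum_prod_type, Matrix.diagonal_apply, smul_eq_mul,
    mul_ite, ite_mul, mul_zero, zero_mul, mul_one, Finset.sum_ite_eq, Finset.sum_ite_eq',
    Finset.mem_univ, if_true, Finset.sum_mul, Finset.mul_sum]
  by_cases h : i = i' <;> simp [h, Finset.mul_sum, Finset.sum_mul]
  subst h
  rw [Finset.sum_comm]
  refine Finset.sum_congr rfl fun a _ => Finset.sum_congr rfl fun b _ => ?_
  have hh := hν i
  linear_combination (μ a * W a b * μ b) * hh

lemma det_corona {n m : ℕ} (A : Matrix (Fin m) (Fin m) ℝ) (Bm : Matrix (Fin n) (Fin n) ℝ)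
    (μ : Fin m → ℝ) (ν : Fin n → ℝ) (r x : ℝ)
    (hμ : ∀ i, μ i * μ i = 1) (hν : ∀ i, ν i * ν i = 1)
    (hrA : A *ᵥ μ = r • μ)
    (hdet : (x • (1 : Matrix (Fin m) (Fin m) ℝ) - A).det ≠ 0)
    (hxr : x ≠ r) (hx2 : x * x - r * x - (m : ℝ) ≠ 0) :
    (x - r) ^ n * (x • 1 - coronaStar Bm A ν μ).det
      = (x • (1 : Matrix (Fin m) (Fin m) ℝ) - A).det ^ n *
        ((x*x*x - r*x*x - (m:ℝ)*x) • (1 : Matrix (Fin n) (Fin n) ℝ) - (x - r) • (Bm*Bm)).det := by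
  have hxr' : x - r ≠ 0 := sub_ne_zero.2 hxr
  set K := muBlock ν μ with hK
  set E := x • (1 : Matrix (Fin m) (Fin m) ℝ) - A with hE
  set W := E⁻¹ with hW
  have hUE : IsUnit E.det := isUnit_iff_ne_zero.2 hdet
  have e1 : x • (1 : Matrix ((Fin n ⊕ Fin n) ⊕ Fin m × Fin n) ((Fin n ⊕ Fin n) ⊕ Fin m × Fin n) ℝ)
        - coronaStar Bm A ν μ
      = Matrix.fromBlocks
          (Matrix.fromBlocks (x • 1) (-Bm) (-Bm) (x • 1))
          (Matrix.fromRows 0 (-K))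
          (Matrix.fromCols 0 (-Kᵀ))
          (E ⊗ₖ (1 : Matrix (Fin n) (Fin n) ℝ)) := by
    unfold coronaStar
    ext (⟨i|i⟩|⟨i,k⟩) (⟨j|j⟩|⟨j,l⟩) <;>
      simp [Matrix.fromBlocks, Matrix.fromRows_apply_inl, Matrix.fromRows_apply_inr,
        Matrix.fromCols_apply_inl, Matrix.fromCols_apply_inr, Matrix.one_apply, hE,
        Matrix.kroneckerMap_apply, Matrix.sub_apply, Matrix.smul_apply, sub_mul, smul_eq_mul,
        Prod.ext_iff, and_comm, hK, Matrix.neg_apply, Pi.neg_apply, Sum.elim_inl, Sum.elim_inr]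
        <;> split_ifs <;> simp_all
  have hUD : IsUnit (E ⊗ₖ (1 : Matrix (Fin n) (Fin n) ℝ)).det := by
    rw [det_kronecker]
    simp [hdet, isUnit_iff_ne_zero, pow_ne_zero]
  haveI iD : Invertible (E ⊗ₖ (1 : Matrix (Fin n) (Fin n) ℝ)) :=
    (E ⊗ₖ (1 : Matrix (Fin n) (Fin n) ℝ)).invertibleOfIsUnitDet hUD
  have hinv : ⅟ (E ⊗ₖ (1 : Matrix (Fin n) (Fin n) ℝ)) = W ⊗ₖ (1 : Matrix (Fin n) (Fin n) ℝ) := by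
    have h1 : (1 : Matrix (Fin n) (Fin n) ℝ)⁻¹ = 1 := Matrix.inv_eq_left_inv (by simp)
    rw [Matrix.invOf_eq_nonsing_inv, Matrix.inv_kronecker, h1]
  have h1 : E *ᵥ μ = (x - r) • μ := by
    rw [hE, Matrix.sub_mulVec, hrA, Matrix.smul_mulVec, Matrix.one_mulVec, sub_smul]
  have h2 : W *ᵥ μ = (x - r)⁻¹ • μ := by
    have h3 : W *ᵥ (E *ᵥ μ) = μ := by
      rw [Matrix.mulVec_mulVec, hW, Matrix.nonsing_inv_mul _ hUE, Matrix.one_mulVec]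
    rw [h1, Matrix.mulVec_smul] at h3
    calc W *ᵥ μ = (x - r)⁻¹ • ((x - r) • (W *ᵥ μ)) := by
          rw [smul_smul, inv_mul_cancel₀ hxr', one_smul]
    _ = (x - r)⁻¹ • μ := by rw [h3]
  set c : ℝ := μ ⬝ᵥ (W *ᵥ μ) with hc
  have hcval : c = (m : ℝ) * (x - r)⁻¹ := by
    rw [hc, h2, dotProduct_smul]
    have : μ ⬝ᵥ μ = (m : ℝ) := by
      simp [dotProduct]
      rw [Finset.sum_congr rfl fun i _ => hμ i]
      simp
    rw [this, smul_eq_mul, mul_comm]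
  have hxc : x - c ≠ 0 := by
    rw [hcval]
    intro h
    apply hx2
    have : (x - (m:ℝ) * (x - r)⁻¹) * (x - r) = 0 := by rw [h]; ring
    rw [sub_mul, mul_assoc, inv_mul_cancel₀ hxr', mul_one] at this
    linear_combination this
  rw [e1, Matrix.det_fromBlocks₂₂, hinv]
  have e2 : Matrix.fromRows (0 : Matrix (Fin n) (Fin m × Fin n) ℝ) (-K)
        * (W ⊗ₖ (1 : Matrix (Fin n) (Fin n) ℝ))
        * Matrix.fromCols (0 : Matrix (Fin m × Fin n) (Fin n) ℝ) (-Kᵀ)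
      = Matrix.fromBlocks 0 0 0 (c • (1 : Matrix (Fin n) (Fin n) ℝ)) := by
    rw [Matrix.fromRows_mul, Matrix.fromRows_mul_fromCols]
    have := muBlock_sandwich ν μ hν W
    rw [← hK] at this
    simp [Matrix.neg_mul, Matrix.mul_neg, this, hc]
  rw [e2]
  have e3 : Matrix.fromBlocks (x • (1 : Matrix (Fin n) (Fin n) ℝ)) (-Bm) (-Bm)
        (x • (1 : Matrix (Fin n) (Fin n) ℝ))
        - Matrix.fromBlocks 0 0 0 (c • (1 : Matrix (Fin n) (Fin n) ℝ))
      = Matrix.fromBlocks (x • 1) (-Bm) (-Bm) ((x - c) • 1) := by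
    ext (i|i) (j|j) <;> simp [Matrix.fromBlocks, Matrix.one_apply, sub_smul] <;> split_ifs <;> simp
  rw [e3]
  have hUc : IsUnit ((x - c) • (1 : Matrix (Fin n) (Fin n) ℝ)).det := by
    rw [Matrix.det_smul, Matrix.det_one]
    simp [isUnit_iff_ne_zero, pow_ne_zero, hxc]
  haveI ic : Invertible ((x - c) • (1 : Matrix (Fin n) (Fin n) ℝ)) :=
    Matrix.invertibleOfIsUnitDet _ hUc
  have hinv2 : ⅟ ((x - c) • (1 : Matrix (Fin n) (Fin n) ℝ))
      = (x - c)⁻¹ • (1 : Matrix (Fin n) (Fin n) ℝ) := by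
    rw [Matrix.invOf_eq_nonsing_inv]
    apply Matrix.inv_eq_right_inv
    rw [Matrix.smul_mul, Matrix.mul_smul, Matrix.one_mul, smul_smul,
      mul_inv_cancel₀ hxc, one_smul]
  rw [Matrix.det_fromBlocks₂₂, hinv2]
  have e4 : x • (1 : Matrix (Fin n) (Fin n) ℝ)
        - (-Bm) * ((x - c)⁻¹ • (1 : Matrix (Fin n) (Fin n) ℝ)) * (-Bm)
      = x • 1 - (x - c)⁻¹ • (Bm * Bm) := by
    rw [Matrix.neg_mul, Matrix.mul_neg, Matrix.neg_mul, neg_neg, Matrix.mul_smul,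
      Matrix.mul_one, Matrix.smul_mul]
  rw [e4]
  rw [det_kronecker, Matrix.det_one, Matrix.det_smul, Matrix.det_one]
  simp only [Fintype.card_fin, one_pow, mul_one]
  have kmat : ((x*x*x - r*x*x - (m:ℝ)*x) • (1 : Matrix (Fin n) (Fin n) ℝ) - (x - r) • (Bm*Bm))
      = ((x - r) * (x - c)) • (x • (1 : Matrix (Fin n) (Fin n) ℝ) - (x - c)⁻¹ • (Bm * Bm)) := by
    rw [smul_sub, smul_smul, smul_smul]
    congr 1
    · congr 1
      rw [hcval]
      field_simp
    · congr 1
      rw [mul_assoc, mul_inv_cancel₀ hxc, mul_one]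
  have key : (x - r) ^ n * ((x - c) ^ n * (x • (1 : Matrix (Fin n) (Fin n) ℝ)
        - (x - c)⁻¹ • (Bm * Bm)).det)
      = ((x*x*x - r*x*x - (m:ℝ)*x) • (1 : Matrix (Fin n) (Fin n) ℝ) - (x - r) • (Bm*Bm)).det := by
    rw [kmat, Matrix.det_smul, Fintype.card_fin, ← mul_assoc, ← mul_pow]
  calc (x - r) ^ n * (E.det ^ n * ((x - c) ^ n * (x • (1 : Matrix (Fin n) (Fin n) ℝ)
        - (x - c)⁻¹ • (Bm * Bm)).det))
      = E.det ^ n * ((x - r) ^ n * ((x - c) ^ n * (x • (1 : Matrix (Fin n) (Fin n) ℝ)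
        - (x - c)⁻¹ • (Bm * Bm)).det)) := by ring
    _ = _ := by rw [key]

/-- The common second factor of the corona characteristic polynomial. -/
noncomputable def gpoly (n m : ℕ) (r : ℝ) (Bm : Matrix (Fin n) (Fin n) ℝ) : ℝ[X] :=
  ((X^3 - Polynomial.C r * X^2 - Polynomial.C (m:ℝ) * X) • (1 : Matrix (Fin n) (Fin n) ℝ[X])
    - (X - Polynomial.C r) • ((Bm*Bm).map Polynomial.C)).det

lemma eval_gpoly (n m : ℕ) (r : ℝ) (Bm : Matrix (Fin n) (Fin n) ℝ) (x : ℝ) :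
    (gpoly n m r Bm).eval x
      = ((x*x*x - r*x*x - (m:ℝ)*x) • (1 : Matrix (Fin n) (Fin n) ℝ) - (x - r) • (Bm*Bm)).det := by
  rw [gpoly, ← Polynomial.coe_evalRingHom, RingHom.map_det]
  congr 1
  ext i j
  simp only [Matrix.map_apply, Matrix.sub_apply, Matrix.smul_apply, smul_eq_mul,
    coe_evalRingHom, eval_mul, eval_sub, eval_pow, eval_X, eval_C]
  have hBB : ∀ i j, eval x ((Bm.map (Polynomial.C : ℝ →+* ℝ[X]) * Bm.map Polynomial.C) i j)
      = (Bm * Bm) i j := by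
    intro i j
    simp [Matrix.mul_apply, Polynomial.eval_finset_sum]
  by_cases h : i = j <;> simp [Matrix.one_apply, h, hBB] <;> ring

lemma charpoly_corona {n m : ℕ} (A : Matrix (Fin m) (Fin m) ℝ) (Bm : Matrix (Fin n) (Fin n) ℝ)
    (μ : Fin m → ℝ) (ν : Fin n → ℝ) (r : ℝ)
    (hμ : ∀ i, μ i * μ i = 1) (hν : ∀ i, ν i * ν i = 1) (hrA : A *ᵥ μ = r • μ) :
    (X - Polynomial.C r) ^ n * (coronaStar Bm A ν μ).charpoly
      = A.charpoly ^ n * gpoly n m r Bm := by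
  apply Polynomial.eq_of_infinite_eval_eq
  have hq : (X^2 - Polynomial.C r * X - Polynomial.C (m:ℝ)) ≠ (0:ℝ[X]) := fun h => by
    simpa [coeff_X_pow, coeff_C] using congrArg (fun p => Polynomial.coeff p 2) h
  have hbad : ({x : ℝ | A.charpoly.IsRoot x} ∪ {r}
      ∪ {x : ℝ | (X^2 - Polynomial.C r * X - Polynomial.C (m:ℝ)).IsRoot x}).Finite :=
    (((Polynomial.finite_setOf_isRoot (Matrix.charpoly_monic A).ne_zero).union
      (Set.finite_singleton r)).union (Polynomial.finite_setOf_isRoot hq))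
  refine hbad.infinite_compl.mono ?_
  intro x hx
  simp only [Set.mem_compl_iff, Set.mem_union, Set.mem_singleton_iff, Set.mem_setOf_eq,
    not_or] at hx
  obtain ⟨⟨hx1, hx2⟩, hx3⟩ := hx
  have hdet : (x • (1 : Matrix (Fin m) (Fin m) ℝ) - A).det ≠ 0 := by
    rw [← eval_charpoly']
    exact hx1
  have hx2' : x * x - r * x - (m : ℝ) ≠ 0 := by
    intro h
    apply hx3
    simp only [IsRoot.def, eval_sub, eval_mul, eval_pow, eval_X, eval_C]
    linear_combination h
  simp only [Set.mem_setOf_eq, eval_mul, eval_pow, eval_sub, eval_X, eval_C]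
  rw [eval_charpoly', eval_charpoly', eval_gpoly]
  exact det_corona A Bm μ ν r x hμ hν hrA hdet hx2 hx2'

lemma monic_pow_inj {p q : ℝ[X]} (hp : p.Monic) (hq : q.Monic) {n : ℕ} (hn : n ≠ 0)
    (h : p ^ n = q ^ n) : p = q := by
  by_contra hne
  have hd : p.natDegree = q.natDegree := by
    have h2 := congrArg natDegree h
    rw [Polynomial.natDegree_pow, Polynomial.natDegree_pow] at h2
    exact Nat.eq_of_mul_eq_mul_left (Nat.pos_of_ne_zero hn) h2
  have hsum : (∑ i ∈ Finset.range n, p ^ i * q ^ (n - 1 - i)) ≠ 0 := by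
    have hco : (∑ i ∈ Finset.range n, p ^ i * q ^ (n - 1 - i)).coeff ((n-1) * p.natDegree)
        = (n : ℝ) := by
      rw [Polynomial.finset_sum_coeff,
        Finset.sum_congr rfl (fun i hi => ?_), Finset.sum_const, Finset.card_range,
        nsmul_eq_mul, mul_one]
      have hmon : (p ^ i * q ^ (n - 1 - i)).Monic := (hp.pow i).mul (hq.pow _)
      have hdeg : (p ^ i * q ^ (n - 1 - i)).natDegree = (n-1) * p.natDegree := by
        rw [Polynomial.natDegree_mul (hp.pow i).ne_zero (hq.pow _).ne_zero,
          Polynomial.natDegree_pow, Polynomial.natDegree_pow, ← hd, ← add_mul]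
        congr 1
        have := Finset.mem_range.1 hi
        omega
      rw [← hdeg]
      exact hmon.coeff_natDegree
    intro h0
    rw [h0, Polynomial.coeff_zero] at hco
    exact hn (by exact_mod_cast hco.symm)
  have hgeo := geom_sum₂_mul p q n
  rw [h, sub_self] at hgeo
  rcases mul_eq_zero.1 hgeo with h' | h'
  · exact hsum h'
  · exact hne (sub_eq_zero.1 h')

lemma energy_corona {n m : ℕ} (A : Matrix (Fin m) (Fin m) ℝ) (Bm : Matrix (Fin n) (Fin n) ℝ)
    (μ : Fin m → ℝ) (ν : Fin n → ℝ) (r : ℝ)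
    (hμ : ∀ i, μ i * μ i = 1) (hν : ∀ i, ν i * ν i = 1) (hrA : A *ᵥ μ = r • μ) :
    energy (coronaStar Bm A ν μ) + n * |r|
      = n * energy A + ((gpoly n m r Bm).roots.map abs).sum := by
  have hcp := charpoly_corona A Bm μ ν r hμ hν hrA
  have hL : (X - Polynomial.C r) ^ n * (coronaStar Bm A ν μ).charpoly ≠ 0 :=
    mul_ne_zero (pow_ne_zero _ (Polynomial.X_sub_C_ne_zero r))
      (Matrix.charpoly_monic _).ne_zero
  have hg : gpoly n m r Bm ≠ 0 := by
    intro h0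
    rw [hcp, h0, mul_zero] at hL
    exact hL rfl
  have hroots := congrArg Polynomial.roots hcp
  rw [Polynomial.roots_mul hL, Polynomial.roots_mul (hcp ▸ hL),
    Polynomial.roots_pow, Polynomial.roots_pow, Polynomial.roots_X_sub_C] at hroots
  have habs := congrArg (fun s : Multiset ℝ => ((s.map abs).sum)) hroots
  simpa [Multiset.map_nsmul, Multiset.sum_nsmul, Multiset.nsmul_singleton, nsmul_eq_mul,
    energy, add_comm, mul_comm] using habs

/-- If `Γ₁, Γ₂` (same order `m`) satisfy `A₁·μ₁ = r·μ₁` and `A₂·μ₂ = r·μ₂`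
for a common real `r` (as holds for `r`-regular signed graphs), are non-cospectral and
equienergetic, then for every signed graph `Γ` of order `n ≥ 1`, `Γ⊛Γ₁` and `Γ⊛Γ₂` are
non-cospectral and equienergetic. -/
theorem corona_equienergetic_regular (m : ℕ) (r : ℝ)
    (A1 : Matrix (Fin m) (Fin m) ℝ) (hA1sym : A1.IsSymm) (hA1diag : ∀ i, A1 i i = 0)
    (hA1ent : ∀ i j, A1 i j = 1 ∨ A1 i j = 0 ∨ A1 i j = -1)
    (μ1 : Fin m → ℝ) (hμ1 : ∀ i, μ1 i = 1 ∨ μ1 i = -1)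
    (hr1 : A1 *ᵥ μ1 = r • μ1)
    (A2 : Matrix (Fin m) (Fin m) ℝ) (hA2sym : A2.IsSymm) (hA2diag : ∀ i, A2 i i = 0)
    (hA2ent : ∀ i j, A2 i j = 1 ∨ A2 i j = 0 ∨ A2 i j = -1)
    (μ2 : Fin m → ℝ) (hμ2 : ∀ i, μ2 i = 1 ∨ μ2 i = -1)
    (hr2 : A2 *ᵥ μ2 = r • μ2)
    (hnoncospec : A1.charpoly ≠ A2.charpoly)
    (henergy : energy A1 = energy A2)
    (n : ℕ) (hn : 1 ≤ n)
    (B : Matrix (Fin n) (Fin n) ℝ) (hBsym : B.IsSymm) (hBdiag : ∀ i, B i i = 0)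
    (hBent : ∀ i j, B i j = 1 ∨ B i j = 0 ∨ B i j = -1)
    (ν : Fin n → ℝ) (hν : ∀ i, ν i = 1 ∨ ν i = -1) :
    energy (coronaStar (Matrix.diagonal ν * B.map abs * Matrix.diagonal ν) A1 ν μ1)
        = energy (coronaStar (Matrix.diagonal ν * B.map abs * Matrix.diagonal ν) A2 ν μ2) ∧
      (coronaStar (Matrix.diagonal ν * B.map abs * Matrix.diagonal ν) A1 ν μ1).charpoly
        ≠ (coronaStar (Matrix.diagonal ν * B.map abs * Matrix.diagonal ν) A2 ν μ2).charpoly := by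
  set Bm := Matrix.diagonal ν * B.map abs * Matrix.diagonal ν with hBm
  have hμ1' : ∀ i, μ1 i * μ1 i = 1 := fun i => by rcases hμ1 i with h | h <;> rw [h] <;> norm_num
  have hμ2' : ∀ i, μ2 i * μ2 i = 1 := fun i => by rcases hμ2 i with h | h <;> rw [h] <;> norm_num
  have hν' : ∀ i, ν i * ν i = 1 := fun i => by rcases hν i with h | h <;> rw [h] <;> norm_num
  have he1 := energy_corona A1 Bm μ1 ν r hμ1' hν' hr1
  have he2 := energy_corona A2 Bm μ2 ν r hμ2' hν' hr2
  constructor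
  · have : n * energy A1 = n * energy A2 := by rw [henergy]
    linarith
  · intro hEq
    have hcp1 := charpoly_corona A1 Bm μ1 ν r hμ1' hν' hr1
    have hcp2 := charpoly_corona A2 Bm μ2 ν r hμ2' hν' hr2
    rw [hEq] at hcp1
    have hmul : A1.charpoly ^ n * gpoly n m r Bm = A2.charpoly ^ n * gpoly n m r Bm := by
      rw [← hcp1, ← hcp2]
    have hL : (X - Polynomial.C r) ^ n
        * (coronaStar Bm A2 ν μ2).charpoly ≠ 0 :=
      mul_ne_zero (pow_ne_zero _ (Polynomial.X_sub_C_ne_zero r))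
        (Matrix.charpoly_monic _).ne_zero
    have hg : gpoly n m r Bm ≠ 0 := by
      intro h0
      rw [hcp2, h0, mul_zero] at hL
      exact hL rfl
    have hpow : A1.charpoly ^ n = A2.charpoly ^ n := mul_right_cancel₀ hg hmul
    exact hnoncospec (monic_pow_inj (Matrix.charpoly_monic A1) (Matrix.charpoly_monic A2)
      (by omega) hpow)
end
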